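/- If a topological space X has a full r-skeleton, then its Alexandroff duplicate AD(X) also has a full r-skeleton. -/

import Mathlib

open Filter Topology Set

universe u v

/-- `[X]^{≤ω}`: the countable subsets of `X`, ordered by inclusion. -/
abbrev CtbSet (X : Type*) := {A : Set X // A.Countable}

/-- A map between families of countable sets is `ω`-monotone if it is monotone with respect to
inclusion and preserves unions of increasing `ω`-chains. -/
def OmegaMonotone {X Y : Type*} (φ : CtbSet X → CtbSet Y) : Prop :=
  (∀ A B : CtbSet X, A.1 ⊆ B.1 → (φ A).1 ⊆ (φ B).1) ∧
  ∀ (A : ℕ → CtbSet X) (B : CtbSet X), (∀ n, (A n).1 ⊆ (A (n + 1)).1) →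
    B.1 = ⋃ n, (A n).1 → (φ B).1 = ⋃ n, (φ (A n)).1

/-- An assignment of sets indexed by a poset `Γ` is `ω`-monotone if it is order preserving and
sends suprema of increasing `ω`-chains to the union of the images. -/
def OmegaMonotoneIdx {Γ Y : Type*} [Preorder Γ] (D : Γ → Set Y) : Prop :=
  (∀ s t : Γ, s ≤ t → D s ⊆ D t) ∧
  ∀ (s : ℕ → Γ) (t : Γ), Monotone s → IsLUB (Set.range s) t → D t = ⋃ n, D (s n)

/-- `N` is a network of the map `f`. -/
def IsNetworkOfMap {X Y : Type*} [TopologicalSpace Y] (N : Set (Set X)) (f : X → Y) : Prop :=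
  ∀ x : X, ∀ U : Set Y, IsOpen U → f x ∈ U → ∃ M ∈ N, x ∈ M ∧ f '' M ⊆ U

/-- `q : X → Y` is an `ℝ`-quotient map. -/
def RQuotient {X Y : Type*} [TopologicalSpace X] [TopologicalSpace Y] (q : X → Y) : Prop :=
  Continuous q ∧ Function.Surjective q ∧ ∀ g : Y → ℝ, Continuous (g ∘ q) → Continuous g

/-- The family `r` of retractions indexed by `Γ` is an `r`-skeleton on `X`. -/
structure IsRSkeleton {X : Type*} [TopologicalSpace X] {Γ : Type*} [PartialOrder Γ]
    (r : Γ → X → X) : Prop where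
  directed : ∀ s t : Γ, ∃ u, s ≤ u ∧ t ≤ u
  sigma : ∀ s : ℕ → Γ, Monotone s → ∃ t, IsLUB (Set.range s) t
  cont : ∀ s, Continuous (r s)
  retract : ∀ s x, r s (r s x) = r s x
  cosmic : ∀ s, ∃ N : Set (Set X), N.Countable ∧ (∀ M ∈ N, M ⊆ Set.range (r s)) ∧
    ∀ x ∈ Set.range (r s), ∀ U : Set X, IsOpen U → x ∈ U → ∃ M ∈ N, x ∈ M ∧ M ⊆ U
  comm₁ : ∀ s t : Γ, s ≤ t → ∀ x, r s (r t x) = r s x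
  comm₂ : ∀ s t : Γ, s ≤ t → ∀ x, r t (r s x) = r s x
  chain : ∀ (s : ℕ → Γ) (t : Γ), Monotone s → IsLUB (Set.range s) t →
    ∀ x, Tendsto (fun n => r (s n) x) atTop (𝓝 (r t x))
  toId : ∀ x : X, Tendsto (fun s : Γ => r s x) atTop (𝓝 x)

def IsFullRSkeleton {X : Type*} [TopologicalSpace X] {Γ : Type*} [PartialOrder Γ]
    (r : Γ → X → X) : Prop :=
  IsRSkeleton r ∧ ∀ x : X, ∃ s : Γ, x ∈ Set.range (r s)

def HasFullRSkeleton (X : Type u) [TopologicalSpace X] : Prop :=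
  ∃ (Γ : Type u) (inst : PartialOrder Γ) (r : Γ → X → X), @IsFullRSkeleton X _ Γ inst r

/-- A strong `r`-skeleton: an `r`-skeleton such that for every index `s`, every `n` and every
closed subset `F` of `X^n` there is `t ≥ s` whose `n`-th power maps `F` into itself. -/
def IsStrongRSkeleton {X : Type*} [TopologicalSpace X] {Γ : Type*} [PartialOrder Γ]
    (r : Γ → X → X) : Prop :=
  IsRSkeleton r ∧ ∀ (s : Γ) (n : ℕ) (F : Set (Fin n → X)), IsClosed F →
    ∃ t : Γ, s ≤ t ∧ (fun (v : Fin n → X) (i : Fin n) => r t (v i)) '' F ⊆ F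

def HasStrongRSkeleton (X : Type u) [TopologicalSpace X] : Prop :=
  ∃ (Γ : Type u) (inst : PartialOrder Γ) (r : Γ → X → X), @IsStrongRSkeleton X _ Γ inst r

/-- A `q`-skeleton on `X` indexed by the up-directed σ-complete poset `Γ`. -/
structure QSkeleton (X : Type u) [TopologicalSpace X] (Γ : Type v) [PartialOrder Γ] where
  Xs : Γ → Type u
  top : ∀ s, TopologicalSpace (Xs s)
  q : ∀ s, X → Xs s
  D : Γ → Set X
  directed : ∀ s t : Γ, ∃ u, s ≤ u ∧ t ≤ u
  sigma : ∀ s : ℕ → Γ, Monotone s → ∃ t, IsLUB (Set.range s) t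
  rquot : ∀ s, @RQuotient X (Xs s) _ (top s) (q s)
  D_ctble : ∀ s, (D s).Countable
  dense : ∀ s, @Dense (Xs s) (top s) (q s '' D s)
  proj : ∀ s t : Γ, s ≤ t → ∃ p : Xs t → Xs s, @Continuous _ _ (top t) (top s) p ∧
    Function.Surjective p ∧ ∀ x, q s x = p (q t x)
  Dmono : OmegaMonotoneIdx D

/-- The `q`-skeleton is full: `C_p(X) = ⋃_s q_s^*(C_p(X_s))`. -/
def QSkeleton.Full {X : Type u} [TopologicalSpace X] {Γ : Type v} [PartialOrder Γ]
    (S : QSkeleton X Γ) : Prop :=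
  ∀ f : X → ℝ, Continuous f →
    ∃ (s : Γ) (g : S.Xs s → ℝ), @Continuous _ _ (S.top s) _ g ∧ f = g ∘ S.q s

def HasFullQSkeleton (X : Type u) [TopologicalSpace X] : Prop :=
  ∃ (Γ : Type u) (inst : PartialOrder Γ) (S : @QSkeleton X _ Γ inst), S.Full

/-- `C_p(X)`: continuous real-valued functions with the topology of pointwise convergence. -/
abbrev Cp (X : Type u) [TopologicalSpace X] : Type u := {f : X → ℝ // Continuous f}

/-- The diagonal map `Δ_A : X → ℝ^A` of a set `A ⊆ C_p(X)`. -/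
def cpDiag {X : Type u} [TopologicalSpace X] (A : Set (Cp X)) (x : X) : ↥A → ℝ :=
  fun f => f.1.1 x

/-- The topology of the Alexandroff duplicate on `X × Bool`. -/
def ADTopology (X : Type*) [TopologicalSpace X] : TopologicalSpace (X × Bool) where
  IsOpen V := ∀ p ∈ V, p.2 = false →
    ∃ U : Set X, IsOpen U ∧ p.1 ∈ U ∧ {q : X × Bool | q.1 ∈ U ∧ q ≠ (p.1, true)} ⊆ V
  isOpen_univ := fun p _ _ => ⟨Set.univ, isOpen_univ, trivial, fun _ _ => trivial⟩
  isOpen_inter := fun A B hA hB p hp hb => by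
    obtain ⟨U, hU, hxU, hUA⟩ := hA p hp.1 hb
    obtain ⟨W, hW, hxW, hWB⟩ := hB p hp.2 hb
    exact ⟨U ∩ W, hU.inter hW, ⟨hxU, hxW⟩,
      fun q hq => ⟨hUA ⟨hq.1.1, hq.2⟩, hWB ⟨hq.1.2, hq.2⟩⟩⟩
  isOpen_sUnion := fun S hS p hp hb => by
    obtain ⟨V, hV, hpV⟩ := hp
    obtain ⟨U, hU, hxU, hUV⟩ := hS V hV p hpV hb
    exact ⟨U, hU, hxU, fun q hq => ⟨V, hV, hUV hq⟩⟩

/-- The Alexandroff duplicate of `X`. -/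
def AD (X : Type u) [TopologicalSpace X] : Type u := X × Bool

instance (X : Type u) [TopologicalSpace X] : TopologicalSpace (AD X) := ADTopology X

/-- A compact Hausdorff space is Corson compact if it embeds into a Σ-product of real lines. -/
def IsCorsonCompact (X : Type u) [TopologicalSpace X] : Prop :=
  CompactSpace X ∧ T2Space X ∧ ∃ (κ : Type u) (e : X → κ → ℝ),
    IsEmbedding e ∧ ∀ x, {i | e x i ≠ 0}.Countable

/-- The assignments `r`, `N` witness that `X` is monotonically retractable. -/
structure MonRetractableWitness (X : Type u) [TopologicalSpace X]
    (r : CtbSet X → X → X) (N : CtbSet X → CtbSet (Set X)) : Prop where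
  cont : ∀ A, Continuous (r A)
  retract : ∀ A x, r A (r A x) = r A x
  sub : ∀ A : CtbSet X, A.1 ⊆ Set.range (r A)
  network : ∀ A, IsNetworkOfMap (N A).1 (r A)
  mono : OmegaMonotone N

def MonotonicallyRetractable (X : Type u) [TopologicalSpace X] : Prop :=
  ∃ (r : CtbSet X → X → X) (N : CtbSet X → CtbSet (Set X)), MonRetractableWitness X r N

/-- `X` is monotonically `ω`-stable. -/
def MonotonicallyOmegaStable (X : Type u) [TopologicalSpace X] : Prop :=
  ∃ N : CtbSet (Cp X) → CtbSet (Set X), OmegaMonotone N ∧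
    ∀ A : CtbSet (Cp X), IsNetworkOfMap (N A).1 (cpDiag (closure A.1))

/-- A subset `K` is countably compact: every countable open cover of `K` has a finite subcover. -/
def IsCountablyCompactSet {X : Type*} [TopologicalSpace X] (K : Set X) : Prop :=
  ∀ U : ℕ → Set X, (∀ n, IsOpen (U n)) → K ⊆ ⋃ n, U n → ∃ t : Finset ℕ, K ⊆ ⋃ n ∈ t, U n

/-- The closure of `A` under `φ`. -/
def phiBar {X : Type*} (φ : CtbSet X → CtbSet X) (A : CtbSet X) : Set X :=
  ⋂₀ {B : Set X | ∃ hB : B.Countable, A.1 ⊆ B ∧ (φ ⟨B, hB⟩).1 ⊆ B}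

/-- The iterates `φ_n` of `φ`: `φ_0(A) = A`, `φ_{n+1}(A) = φ_n(A) ∪ φ(φ_n(A))`. -/
def phiIter {X : Type*} (φ : CtbSet X → CtbSet X) : ℕ → CtbSet X → CtbSet X
  | 0, A => A
  | n + 1, A => ⟨(phiIter φ n A).1 ∪ (φ (phiIter φ n A)).1,
      (phiIter φ n A).2.union (φ (phiIter φ n A)).2⟩

section ADAux

variable {X : Type u} [TopologicalSpace X]

lemma ad_false_ne_true (y z : X) : ((y, false) : X × Bool) ≠ (z, true) :=
  fun hq => Bool.false_ne_true (congrArg Prod.snd hq)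

lemma adOpen_iff {V : Set (AD X)} : IsOpen V ↔ ∀ p ∈ V, p.2 = false →
    ∃ U : Set X, IsOpen U ∧ p.1 ∈ U ∧ {q : X × Bool | q.1 ∈ U ∧ q ≠ (p.1, true)} ⊆ V :=
  Iff.rfl

lemma adOpen_singleton_true (x : X) : IsOpen ({(x, true)} : Set (AD X)) := by
  rw [adOpen_iff]
  rintro p hp hb
  replace hp : p = (x, true) := hp
  subst hp; simp at hb

lemma adOpen_punct [T1Space X] {U : Set X} (hU : IsOpen U) (x : X) :
    IsOpen ({q : X × Bool | q.1 ∈ U ∧ q ≠ (x, true)} : Set (AD X)) := by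
  rw [adOpen_iff]
  rintro p ⟨hpU, hpne⟩ hb
  by_cases hx : p.1 = x
  · refine ⟨U, hU, hpU, fun q hq => ⟨hq.1, by rw [hx] at hq; exact hq.2⟩⟩
  · refine ⟨U \ {x}, hU.sdiff isClosed_singleton, ⟨hpU, hx⟩, fun q hq => ⟨hq.1.1, ?_⟩⟩
    intro hqe
    exact hq.1.2 (by rw [hqe]; exact rfl)

lemma adOpen_ne_true [T1Space X] (x : X) :
    IsOpen ({q : X × Bool | q ≠ (x, true)} : Set (AD X)) := by
  have := adOpen_punct (X := X) isOpen_univ x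
  convert this using 1
  ext q; simp

lemma continuousAt_of_singleton_open {Y : Type*} {Z : Type*} [TopologicalSpace Y]
    [TopologicalSpace Z] {f : Y → Z} {p : Y} (h : IsOpen {p}) : ContinuousAt f p := by
  have hp : 𝓝 p = pure p := (isOpen_singleton_iff_nhds_eq_pure p).mp h
  rw [ContinuousAt, hp]
  exact tendsto_pure_left.2 fun s hs => mem_of_mem_nhds hs

/-- Convergence to a `false`-point of the duplicate from convergence in `X`. -/
lemma adTendsto_false {ι : Type*} {l : Filter ι} {f : ι → X} {y : X} {p : AD X}
    {g : ι → AD X} (hg : ∀ i, g i = (f i, false)) (hp : p = (y, false))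
    (hf : Filter.Tendsto f l (𝓝 y)) : Filter.Tendsto g l (𝓝 p) := by
  rw [tendsto_nhds]
  intro V hV hpV
  subst hp
  obtain ⟨U, hU, hyU, hsub⟩ := adOpen_iff.mp hV (y, false) hpV rfl
  have hUy : U ∈ 𝓝 y := hU.mem_nhds hyU
  filter_upwards [hf hUy] with i hi
  show g i ∈ V
  rw [hg i]
  exact hsub ⟨hi, ad_false_ne_true _ _⟩

end ADAux

theorem hasFullRSkeleton_AD (X : Type u) [TopologicalSpace X] [T35Space X]
    (h : HasFullRSkeleton X) : HasFullRSkeleton (AD X) := by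
  classical
  obtain ⟨Γ, instΓ, r, hsk, hfull⟩ := h
  letI := instΓ
  have hfix : ∀ x : X, ∀ s : Γ, x ∈ Set.range (r s) → r s x = x := by
    rintro x s ⟨y, rfl⟩
    exact hsk.retract s y
  let Γ' : Type u := {p : Γ × CtbSet X // ∀ a ∈ p.2.1, r p.1 a = a}
  letI instΓ' : PartialOrder Γ' := inferInstance
  let R : Γ' → AD X → AD X := fun γ p =>
    if p.2 = true ∧ p.1 ∈ γ.1.2.1 then p else (r γ.1.1 p.1, false)
  have hle : ∀ {γ δ : Γ'}, γ ≤ δ → γ.1.1 ≤ δ.1.1 ∧ γ.1.2.1 ⊆ δ.1.2.1 := by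
    intro γ δ h
    exact ⟨h.1, h.2⟩
  have hR_true : ∀ (γ : Γ') (x : X), x ∈ γ.1.2.1 → R γ (x, true) = (x, true) := by
    intro γ x hx
    exact if_pos ⟨rfl, hx⟩
  have hR_not : ∀ (γ : Γ') (p : AD X), ¬(p.2 = true ∧ p.1 ∈ γ.1.2.1) →
      R γ p = (r γ.1.1 p.1, false) := by
    intro γ p hp
    exact if_neg hp
  have hR_false : ∀ (γ : Γ') (x : X), R γ (x, false) = (r γ.1.1 x, false) := by
    intro γ x
    exact hR_not γ (x, false) (by simp)
  have hfixmem : ∀ (γ : Γ'), ∀ x ∈ γ.1.2.1, r γ.1.1 x = x := fun γ x hx => γ.2 x hx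
  have hfixle : ∀ {s t : Γ}, s ≤ t → ∀ x : X, r s x = x → r t x = x := by
    intro s t hst x hx
    have h2 := hsk.comm₂ s t hst x
    rw [hx] at h2
    exact h2
  refine ⟨Γ', instΓ', R, ?_, ?_⟩
  · constructor
    · -- directed
      rintro ⟨⟨s, A⟩, hA⟩ ⟨⟨t, B⟩, hB⟩
      obtain ⟨u, hsu, htu⟩ := hsk.directed s t
      refine ⟨⟨⟨u, ⟨A.1 ∪ B.1, A.2.union B.2⟩⟩, ?_⟩, ⟨hsu, Set.subset_union_left⟩,
        ⟨htu, Set.subset_union_right⟩⟩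
      rintro a (ha | ha)
      · exact hfixle hsu a (hA a ha)
      · exact hfixle htu a (hB a ha)
    · -- σ-completeness
      intro γ hmono
      obtain ⟨t, ht⟩ := hsk.sigma (fun n => (γ n).1.1) (fun m n hmn => (hle (hmono hmn)).1)
      have htub : ∀ n, (γ n).1.1 ≤ t := fun n => ht.1 ⟨n, rfl⟩
      refine ⟨⟨⟨t, ⟨⋃ n, (γ n).1.2.1, Set.countable_iUnion fun n => (γ n).1.2.2⟩⟩, ?_⟩, ?_, ?_⟩
      · rintro a ha
        simp only [Set.mem_iUnion] at ha
        obtain ⟨n, hn⟩ := ha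
        have hfa : ∀ m, n ≤ m → r (γ m).1.1 a = a := fun m hm =>
          hfixmem (γ m) a ((hle (hmono hm)).2 hn)
        have h1 := hsk.chain (fun n => (γ n).1.1) t (fun m n hmn => (hle (hmono hmn)).1) ht a
        have heq : (fun _ : ℕ => a) =ᶠ[atTop] fun m => r (γ m).1.1 a := by
          filter_upwards [Filter.eventually_atTop.2 ⟨n, hfa⟩] with m hm using hm.symm
        have h2 : Filter.Tendsto (fun m => r (γ m).1.1 a) atTop (𝓝 a) :=
          Filter.Tendsto.congr' heq tendsto_const_nhds
        exact tendsto_nhds_unique h1 h2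
      · rintro δ ⟨n, rfl⟩
        exact ⟨htub n, Set.subset_iUnion (fun n => ((γ n).1.2.1 : Set X)) n⟩
      · rintro δ hδ
        have hδn : ∀ n, γ n ≤ δ := fun n => hδ ⟨n, rfl⟩
        refine ⟨ht.2 ?_, Set.iUnion_subset fun n => (hle (hδn n)).2⟩
        rintro u ⟨n, rfl⟩
        exact (hle (hδn n)).1
    · -- continuity
      intro γ
      rw [continuous_iff_continuousAt]
      rintro ⟨x, b⟩
      cases b
      · unfold ContinuousAt
        rw [hR_false]
        refine tendsto_nhds.mpr ?_
        intro V hV hrV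
        obtain ⟨U, hU, hrU, hsub⟩ := adOpen_iff.mp hV _ hrV rfl
        set N : Set (AD X) :=
          {q : X × Bool | q.1 ∈ r γ.1.1 ⁻¹' U ∧ q ≠ (x, true)} ∩
          {q : X × Bool | q ≠ (r γ.1.1 x, true)} with hN
        have hNopen : IsOpen N :=
          (adOpen_punct (hU.preimage (hsk.cont γ.1.1)) x).inter (adOpen_ne_true _)
        have hNmem : (x, false) ∈ N :=
          ⟨⟨hrU, ad_false_ne_true x x⟩, ad_false_ne_true x (r γ.1.1 x)⟩
        refine Filter.eventually_of_mem (hNopen.mem_nhds hNmem) ?_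
        rintro ⟨y, c⟩ ⟨⟨hyU, hyne⟩, hyne'⟩
        by_cases hc : c = true ∧ y ∈ γ.1.2.1
        · obtain ⟨hc1, hc2⟩ := hc
          subst hc1
          rw [hR_true γ y hc2]
          have hyU' : r γ.1.1 y ∈ U := hyU
          rw [hfixmem γ y hc2] at hyU'
          exact hsub ⟨hyU', hyne'⟩
        · rw [hR_not γ (y, c) hc]
          exact hsub ⟨hyU, ad_false_ne_true _ _⟩
      · exact continuousAt_of_singleton_open (adOpen_singleton_true x)
    · -- retraction
      rintro γ ⟨x, b⟩
      by_cases hc : b = true ∧ x ∈ γ.1.2.1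
      · obtain ⟨hb, hx⟩ := hc
        subst hb
        rw [hR_true γ x hx, hR_true γ x hx]
      · rw [hR_not γ (x, b) hc, hR_false, hsk.retract]
    · -- cosmic
      intro γ
      obtain ⟨N, hNc, hNsub, hNnet⟩ := hsk.cosmic γ.1.1
      refine ⟨((fun M => (fun y => ((y, false) : AD X)) '' M) '' N) ∪
        ((fun a => ({(a, true)} : Set (AD X))) '' γ.1.2.1), ?_, ?_, ?_⟩
      · exact (hNc.image _).union (γ.1.2.2.image _)
      · rintro M (⟨M₀, hM₀, rfl⟩ | ⟨a, ha, rfl⟩)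
        · rintro p ⟨y, hy, rfl⟩
          have hy' : r γ.1.1 y = y := hfix y γ.1.1 (hNsub M₀ hM₀ hy)
          exact ⟨(y, false), by rw [hR_false, hy']⟩
        · rintro p hp
          simp only [Set.mem_singleton_iff] at hp
          subst hp
          exact ⟨(a, true), hR_true γ a ha⟩
      · rintro p ⟨⟨x, b⟩, rfl⟩ U hU hpU
        by_cases hc : b = true ∧ x ∈ γ.1.2.1
        · obtain ⟨hb, hx⟩ := hc
          subst hb
          rw [hR_true γ x hx] at hpU ⊢
          refine ⟨{(x, true)}, Or.inr ⟨x, hx, rfl⟩, rfl, ?_⟩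
          rintro q hq
          replace hq : q = (x, true) := hq
          subst hq
          exact hpU
        · rw [hR_not γ (x, b) hc] at hpU ⊢
          obtain ⟨W, hW, hrW, hsub⟩ := adOpen_iff.mp hU _ hpU rfl
          obtain ⟨M, hM, hrM, hMW⟩ := hNnet (r γ.1.1 (x, b).1) ⟨(x, b).1, rfl⟩ W hW hrW
          refine ⟨(fun y => ((y, false) : AD X)) '' M, Or.inl ⟨M, hM, rfl⟩,
            ⟨r γ.1.1 (x, b).1, hrM, rfl⟩, ?_⟩
          rintro q ⟨y, hy, rfl⟩
          exact hsub ⟨hMW hy, ad_false_ne_true _ _⟩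
    · -- comm₁
      rintro γ δ hγδ ⟨x, b⟩
      by_cases hc : b = true ∧ x ∈ δ.1.2.1
      · obtain ⟨hb, hx⟩ := hc
        subst hb
        rw [hR_true δ x hx]
      · rw [hR_not δ (x, b) hc, hR_false]
        by_cases hc' : b = true ∧ x ∈ γ.1.2.1
        · exact absurd ⟨hc'.1, (hle hγδ).2 hc'.2⟩ hc
        · rw [hR_not γ (x, b) hc']
          rw [hsk.comm₁ γ.1.1 δ.1.1 (hle hγδ).1 x]
    · -- comm₂
      rintro γ δ hγδ ⟨x, b⟩
      by_cases hc : b = true ∧ x ∈ γ.1.2.1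
      · obtain ⟨hb, hx⟩ := hc
        subst hb
        rw [hR_true γ x hx, hR_true δ x ((hle hγδ).2 hx)]
      · rw [hR_not γ (x, b) hc, hR_false, hsk.comm₂ γ.1.1 δ.1.1 (hle hγδ).1 x]
    · -- chain
      intro γ δ hmono hlub p
      obtain ⟨t, ht⟩ := hsk.sigma (fun n => (γ n).1.1) (fun m n hmn => (hle (hmono hmn)).1)
      have hδub : ∀ n, γ n ≤ δ := fun n => hlub.1 ⟨n, rfl⟩
      have hBfix : ∀ a ∈ (⋃ n, ((γ n).1.2.1 : Set X)), r t a = a := by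
        rintro a ha
        simp only [Set.mem_iUnion] at ha
        obtain ⟨n, hn⟩ := ha
        have hfa : ∀ m, n ≤ m → r (γ m).1.1 a = a := fun m hm =>
          hfixmem (γ m) a ((hle (hmono hm)).2 hn)
        have h1 := hsk.chain (fun n => (γ n).1.1) t (fun m n hmn => (hle (hmono hmn)).1) ht a
        have heq : (fun _ : ℕ => a) =ᶠ[atTop] fun m => r (γ m).1.1 a := by
          filter_upwards [Filter.eventually_atTop.2 ⟨n, hfa⟩] with m hm using hm.symm
        have h2 : Filter.Tendsto (fun m => r (γ m).1.1 a) atTop (𝓝 a) :=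
          Filter.Tendsto.congr' heq tendsto_const_nhds
        exact tendsto_nhds_unique h1 h2
      set δ₀ : Γ' := ⟨⟨t, ⟨⋃ n, (γ n).1.2.1,
        Set.countable_iUnion fun n => (γ n).1.2.2⟩⟩, hBfix⟩ with hδ₀
      have hδ₀ub : δ₀ ∈ upperBounds (Set.range γ) := by
        rintro u ⟨n, rfl⟩
        exact ⟨ht.1 ⟨n, rfl⟩, Set.subset_iUnion (fun n => ((γ n).1.2.1 : Set X)) n⟩
      have hδle : δ ≤ δ₀ := hlub.2 hδ₀ub
      have htle : t ≤ δ.1.1 := by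
        refine ht.2 ?_
        rintro u ⟨n, rfl⟩
        exact (hle (hδub n)).1
      have ht' : δ.1.1 = t := le_antisymm (hle hδle).1 htle
      have hBeq : δ.1.2.1 = ⋃ n, ((γ n).1.2.1 : Set X) :=
        Set.Subset.antisymm (hle hδle).2 (Set.iUnion_subset fun n => (hle (hδub n)).2)
      rcases p with ⟨x, b⟩
      by_cases hc : b = true ∧ x ∈ δ.1.2.1
      · obtain ⟨hb, hx⟩ := hc
        subst hb
        rw [hR_true δ x hx]
        rw [hBeq] at hx
        simp only [Set.mem_iUnion] at hx
        obtain ⟨m, hm⟩ := hx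
        have heq : (fun _ : ℕ => ((x, true) : AD X)) =ᶠ[atTop]
            fun n => R (γ n) (x, true) := by
          filter_upwards [Filter.eventually_atTop.2 ⟨m, fun n hn => hn⟩] with n hn
          exact (hR_true (γ n) x ((hle (hmono hn)).2 hm)).symm
        exact Filter.Tendsto.congr' heq tendsto_const_nhds
      · rw [hR_not δ (x, b) hc]
        have hn : ∀ n, R (γ n) (x, b) = (r (γ n).1.1 x, false) := by
          intro n
          refine hR_not (γ n) (x, b) ?_
          rintro ⟨hb, hx⟩
          exact hc ⟨hb, (hle (hδub n)).2 hx⟩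
        have hchain := hsk.chain (fun n => (γ n).1.1) t
          (fun m n hmn => (hle (hmono hmn)).1) ht x
        rw [ht']
        exact adTendsto_false hn rfl hchain
    · -- toId
      rintro ⟨x, b⟩
      obtain ⟨s, hs⟩ := hfull x
      have hx : r s x = x := hfix x s hs
      cases b
      · refine tendsto_nhds.mpr ?_
        intro V hV hpV
        obtain ⟨U, hU, hxU, hsub⟩ := adOpen_iff.mp hV _ hpV rfl
        haveI : Nonempty Γ := ⟨s⟩
        haveI : IsDirected Γ (· ≤ ·) := ⟨hsk.directed⟩
        have h1 : (fun u : Γ => r u x) ⁻¹' U ∈ (atTop : Filter Γ) :=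
          hsk.toId x (hU.mem_nhds hxU)
        obtain ⟨s₀, -, hs₀⟩ := Filter.atTop_basis.mem_iff.mp h1
        have hγ₀fix : ∀ a ∈ ((⟨∅, Set.countable_empty⟩ : CtbSet X) : CtbSet X).1,
            r s₀ a = a := by
          rintro a ha
          exact absurd ha (Set.notMem_empty a)
        refine Filter.mem_of_superset
          (Filter.Ici_mem_atTop (⟨⟨s₀, ⟨∅, Set.countable_empty⟩⟩, hγ₀fix⟩ : Γ')) ?_
        intro γ hγ
        show R γ (x, false) ∈ V
        rw [hR_false]
        exact hsub ⟨hs₀ ((hle hγ).1 : s₀ ≤ γ.1.1), ad_false_ne_true _ _⟩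
      · have hγ₀fix : ∀ a ∈ ({x} : Set X), r s a = a := by
          rintro a ha
          simp only [Set.mem_singleton_iff] at ha
          subst ha
          exact hx
        have heq : (fun _ : Γ' => ((x, true) : AD X)) =ᶠ[atTop]
            fun γ => R γ (x, true) := by
          refine Filter.mem_of_superset
            (Filter.Ici_mem_atTop (⟨⟨s, ⟨{x}, Set.countable_singleton x⟩⟩, hγ₀fix⟩ : Γ')) ?_
          intro γ hγ
          exact (hR_true γ x ((hle hγ).2 rfl)).symm
        exact Filter.Tendsto.congr' heq tendsto_const_nhds
  · -- fullness
    rintro ⟨x, b⟩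
    obtain ⟨s, hs⟩ := hfull x
    have hx : r s x = x := hfix x s hs
    cases b
    · refine ⟨⟨⟨s, ⟨∅, Set.countable_empty⟩⟩, fun a ha => absurd ha (Set.notMem_empty a)⟩,
        (x, false), ?_⟩
      rw [hR_false, hx]
    · refine ⟨⟨⟨s, ⟨{x}, Set.countable_singleton x⟩⟩, ?_⟩, (x, true), ?_⟩
      · rintro a ha
        simp only [Set.mem_singleton_iff] at ha
        subst ha
        exact hx
      · exact hR_true _ x rfl
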